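/- If x is a positive integer that is not equal to l_a for any natural number a, then γ(x − l̃_{γ(x)}) ≤ γ(x) − 2. -/

import Mathlib

/-- The Lucas sequence: l 0 = 2, l 1 = 1, l (n+2) = l (n+1) + l n. -/
def lucas : ℕ → ℕ
  | 0 => 2
  | 1 => 1
  | n + 2 => lucas (n + 1) + lucas n

/-- The modified (monotone) Lucas sequence: l̃ 0 = 1, l̃ 1 = 2, l̃ n = l n for n ≥ 2. -/
def ltil : ℕ → ℕ
  | 0 => 1
  | 1 => 2
  | n + 2 => lucas (n + 2)

/-- β x : minimal number of summands in a representation of x as a sum of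
modified Lucas numbers (with repetitions allowed). -/
noncomputable def beta (x : ℕ) : ℕ :=
  sInf {s : ℕ | ∃ k : ℕ, ∃ b : ℕ → ℕ,
    x = ∑ i ∈ Finset.range (k + 1), b i * ltil i ∧ s = ∑ i ∈ Finset.range (k + 1), b i}

/-- γ x : the greatest k with l̃ k ≤ x (for x ≥ 1). -/
noncomputable def gamma (x : ℕ) : ℕ := sSup {k : ℕ | ltil k ≤ x}

/-- S a : the additive submonoid of ℕ generated by {l_a} ∪ {l_a + l_n : n ∈ ℕ}. -/
def Sset (a : ℕ) : AddSubmonoid ℕ :=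
  AddSubmonoid.closure ({lucas a} ∪ {x : ℕ | ∃ n : ℕ, x = lucas a + lucas n})

/-- T a : the additive submonoid of ℕ generated by {l_a + l_n : n ∈ ℕ}. -/
def Tset (a : ℕ) : AddSubmonoid ℕ :=
  AddSubmonoid.closure {x : ℕ | ∃ n : ℕ, x = lucas a + lucas n}

lemma lucas_pos : ∀ n, 0 < lucas n
  | 0 => by simp [lucas]
  | 1 => by simp [lucas]
  | n + 2 => by rw [lucas]; exact Nat.add_pos_left (lucas_pos (n + 1)) _

lemma ltil_lt_succ : ∀ k, ltil k < ltil (k + 1)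
  | 0 => by simp [ltil]
  | 1 => by simp [ltil, lucas]
  | k + 2 => by
      show lucas (k + 2) < ltil (k + 3)
      show lucas (k + 2) < lucas (k + 3)
      have : lucas (k + 3) = lucas (k + 2) + lucas (k + 1) := rfl
      have := lucas_pos (k + 1)
      omega

lemma ltil_mono : StrictMono ltil := strictMono_nat_of_lt_succ ltil_lt_succ

theorem gamma_drop (x : ℕ) (hx : 0 < x) (h : ∀ a : ℕ, x ≠ lucas a) :
    gamma (x - ltil (gamma x)) ≤ gamma x - 2 := by
  set S : Set ℕ := {k : ℕ | ltil k ≤ x} with hS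
  have hbdd : BddAbove S := ⟨x, fun k hk => le_trans ltil_mono.le_apply hk⟩
  have h0 : (0 : ℕ) ∈ S := by simpa [hS, ltil] using Nat.succ_le_of_lt hx
  have hne : S.Nonempty := ⟨0, h0⟩
  have hgx : gamma x = sSup S := rfl
  set g := gamma x with hg
  have hmem : ltil g ≤ x := Nat.sSup_mem hne hbdd
  have hlt : x < ltil (g + 1) := by
    by_contra h'
    push_neg at h'
    have : g + 1 ≤ g := le_csSup hbdd h'
    omega
  have hxe : x ≠ ltil g := by
    match g, hmem with
    | 0, _ => exact h 1
    | 1, _ => exact h 0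
    | n + 2, _ => exact h (n + 2)
  have hgt : ltil g < x := lt_of_le_of_ne hmem (Ne.symm hxe)
  have hg3 : 3 ≤ g := by
    by_contra h'
    push_neg at h'
    interval_cases g <;> simp [ltil, lucas] at hgt hlt <;> omega
  obtain ⟨m, hm⟩ : ∃ m, g = m + 3 := ⟨g - 3, by omega⟩
  rw [hm] at hgt hlt ⊢
  have hgt' : ltil (m + 3) < x := hgt
  have hlt' : x < ltil (m + 4) := hlt
  have hrec : ltil (m + 4) = ltil (m + 3) + ltil (m + 2) := by
    show lucas (m + 4) = lucas (m + 3) + lucas (m + 2)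
    rfl
  have hy : x - ltil (m + 3) < ltil (m + 2) := by omega
  have hyn : (0 : ℕ) ∈ {k : ℕ | ltil k ≤ x - ltil (m + 3)} := by
    have : (ltil 0 : ℕ) = 1 := rfl
    simp only [Set.mem_setOf_eq, this]
    omega
  refine csSup_le ⟨0, hyn⟩ (fun k hk => ?_)
  have : ltil k < ltil (m + 2) := lt_of_le_of_lt hk hy
  have := ltil_mono.lt_iff_lt.mp this
  omega
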